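/- If T is an in-tree (all arcs directed towards a root sink) containing two vertex-disjoint subtrees isomorphic to the Fibonacci trees F_k and F_{k+1} whose sinks are not ancestors of each other, then every correct strategy for the Regression Search Problem on T requires at least k + 1 queries in the worst case. -/

import Mathlib

/-- A strategy is a binary decision tree: internal nodes are queried vertices,
leaves identify the faulty vertex. -/
inductive Strategy (V : Type) : Type where
  | leaf : V → Strategy V
  | node : V → Strategy V → Strategy V → Strategy V

namespace Strategy

/-- The worst-case number of queries of a strategy is the height of the tree. -/
def height {V : Type} : Strategy V → ℕ
  | leaf _ => 0
  | node _ l r => 1 + max l.height r.height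

open Classical in
/-- Running a strategy: `anc u v` means `u` is an ancestor of `v` (including `u = v`).
A query of `q` answers "bugged" (left subtree) iff the faulty vertex `f` is an ancestor
of `q`, and "clean" (right subtree) otherwise. The result is the vertex identified at
the reached leaf. -/
noncomputable def run {V : Type} (anc : V → V → Prop) : Strategy V → V → V
  | leaf v, _ => v
  | node q l r, f => if anc f q then run anc l f else run anc r f

end Strategy


/-- Shapes of rooted in-trees: a single vertex, a sink with one parent subtree, or a
sink with two parent subtrees. -/
inductive ITree : Type where
  | leaf : ITree
  | node1 : ITree → ITree
  | node2 : ITree → ITree → ITree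

/-- The vertices of an in-tree shape. -/
def Pos : ITree → Type
  | .leaf => PUnit
  | .node1 t => Pos t ⊕ PUnit
  | .node2 t s => (Pos t ⊕ Pos s) ⊕ PUnit

def posFintype : ∀ t : ITree, Fintype (Pos t)
  | .leaf => inferInstanceAs (Fintype PUnit)
  | .node1 t =>
      letI := posFintype t
      inferInstanceAs (Fintype (Pos t ⊕ PUnit))
  | .node2 t s =>
      letI := posFintype t
      letI := posFintype s
      inferInstanceAs (Fintype ((Pos t ⊕ Pos s) ⊕ PUnit))

attribute [instance] posFintype

/-- The sink (root) of an in-tree. -/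
def sinkOf : ∀ t : ITree, Pos t
  | .leaf => PUnit.unit
  | .node1 _ => Sum.inr PUnit.unit
  | .node2 _ _ => Sum.inr PUnit.unit

/-- The arcs of an in-tree: all arcs are directed towards the sink. -/
def edgeOf : ∀ t : ITree, Pos t → Pos t → Prop
  | .node1 t, .inl a, .inl b => edgeOf t a b
  | .node1 t, .inl a, .inr _ => a = sinkOf t
  | .node2 t _, .inl (.inl a), .inl (.inl b) => edgeOf t a b
  | .node2 _ s, .inl (.inr a), .inl (.inr b) => edgeOf s a b
  | .node2 t _, .inl (.inl a), .inr _ => a = sinkOf t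
  | .node2 _ s, .inl (.inr a), .inr _ => a = sinkOf s
  | _, _, _ => False

/-- The `i`-th Fibonacci tree `F_i` (indices `i ≥ 1`; `FibTree 0` is a dummy value):
`F₁` is a single vertex, `F₂` is a single arc, and `F_{i+1}` is a sink whose two parents
are the sinks of disjoint copies of `F_i` and `F_{i-1}`. -/
def FibTree : ℕ → ITree
  | 0 => .leaf
  | 1 => .leaf
  | 2 => .node1 .leaf
  | (n + 3) => .node2 (FibTree (n + 2)) (FibTree (n + 1))

section Helpers

variable {V : Type} {E : V → V → Prop}

private lemma reach_back (hacyc : ∀ v : V, ¬ Relation.TransGen E v v)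
    {x y : V} (h : Relation.ReflTransGen E x y) (h' : E y x) : False :=
  hacyc x (Relation.TransGen.tail' h h')

private lemma uniq [Fintype V] (htree : ∀ v : V, {w | E v w}.ncard ≤ 1)
    {v w w' : V} (h : E v w) (h' : E v w') : w = w' :=
  (Set.ncard_le_one (Set.toFinite _)).mp (htree v) w h w' h'

private lemma step_of [Fintype V] (htree : ∀ v : V, {w | E v w}.ncard ≤ 1)
    {x y z : V} (hx : Relation.ReflTransGen E x y) (hne : x ≠ y) (hz : E x z) :
    Relation.ReflTransGen E z y := by
  rcases hx.cases_head with h | ⟨c, hc, hcy⟩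
  · exact absurd h hne
  · rwa [uniq htree hz hc]

private lemma incomp_step [Fintype V] (hacyc : ∀ v : V, ¬ Relation.TransGen E v v)
    (htree : ∀ v : V, {w | E v w}.ncard ≤ 1)
    {x y z : V} (hx : E x z) (hy : E y z) (hxy : x ≠ y) :
    ¬ Relation.ReflTransGen E x y := fun h =>
  reach_back hacyc (step_of htree h hxy hx) hy

private lemma reach_sink : ∀ (t : ITree) (p : Pos t),
    Relation.ReflTransGen (edgeOf t) p (sinkOf t) := by
  intro t
  induction t with
  | leaf => intro p; exact .refl
  | node1 t ih =>
    intro p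
    match p with
    | .inl a =>
      have h1 : Relation.ReflTransGen (edgeOf (.node1 t)) (Sum.inl a) (Sum.inl (sinkOf t)) :=
        Relation.ReflTransGen.lift Sum.inl (fun x y h => h) _ _ (ih a)
      exact h1.tail (show edgeOf (.node1 t) (.inl (sinkOf t)) (.inr PUnit.unit) from rfl)
    | .inr u => exact .refl
  | node2 t s iht ihs =>
    intro p
    match p with
    | .inl (.inl a) =>
      have h1 : Relation.ReflTransGen (edgeOf (.node2 t s)) (Sum.inl (Sum.inl a))
          (Sum.inl (Sum.inl (sinkOf t))) :=
        Relation.ReflTransGen.lift (fun x => Sum.inl (Sum.inl x)) (fun x y h => h) _ _ (iht a)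
      exact h1.tail (show edgeOf (.node2 t s) (.inl (.inl (sinkOf t))) (.inr PUnit.unit) from rfl)
    | .inl (.inr a) =>
      have h1 : Relation.ReflTransGen (edgeOf (.node2 t s)) (Sum.inl (Sum.inr a))
          (Sum.inl (Sum.inr (sinkOf s))) :=
        Relation.ReflTransGen.lift (fun x => Sum.inl (Sum.inr x)) (fun x y h => h) _ _ (ihs a)
      exact h1.tail (show edgeOf (.node2 t s) (.inl (.inr (sinkOf s))) (.inr PUnit.unit) from rfl)
    | .inr u => exact .refl

private lemma exists_out : ∀ (t : ITree) (p : Pos t), p ≠ sinkOf t → ∃ p', edgeOf t p p' := by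
  intro t
  induction t with
  | leaf => intro p hp; exact absurd rfl hp
  | node1 t ih =>
    intro p hp
    match p with
    | .inl a =>
      by_cases h : a = sinkOf t
      · exact ⟨.inr PUnit.unit, h⟩
      · obtain ⟨p', hp'⟩ := ih a h
        exact ⟨.inl p', hp'⟩
    | .inr u => exact absurd rfl hp
  | node2 t s iht ihs =>
    intro p hp
    match p with
    | .inl (.inl a) =>
      by_cases h : a = sinkOf t
      · exact ⟨.inr PUnit.unit, h⟩
      · obtain ⟨p', hp'⟩ := iht a h
        exact ⟨.inl (.inl p'), hp'⟩
    | .inl (.inr a) =>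
      by_cases h : a = sinkOf s
      · exact ⟨.inr PUnit.unit, h⟩
      · obtain ⟨p', hp'⟩ := ihs a h
        exact ⟨.inl (.inr p'), hp'⟩
    | .inr u => exact absurd rfl hp

private lemma escape [Fintype V] (htree : ∀ v : V, {w | E v w}.ncard ≤ 1)
    {t : ITree} {h : Pos t → V}
    (hE : ∀ a b, edgeOf t a b ↔ E (h a) (h b)) :
    ∀ {p : Pos t} {q : V}, Relation.ReflTransGen E (h p) q →
      (∃ p', q = h p') ∨ Relation.ReflTransGen E (h (sinkOf t)) q := by
  have key : ∀ (v q : V), Relation.ReflTransGen E v q →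
      ∀ p : Pos t, v = h p →
      (∃ p', q = h p') ∨ Relation.ReflTransGen E (h (sinkOf t)) q := by
    intro v q hvq
    induction hvq using Relation.ReflTransGen.head_induction_on with
    | refl => intro p hp; exact Or.inl ⟨p, hp⟩
    | head hac hcq ih =>
      intro p hp
      subst hp
      by_cases hs : p = sinkOf t
      · subst hs
        exact Or.inr (Relation.ReflTransGen.head hac hcq)
      · obtain ⟨p₂, hp₂⟩ := exists_out t p hs
        have hE2 : E (h p) (h p₂) := (hE _ _).mp hp₂
        exact ih p₂ (uniq htree hac hE2)
  intro p q hpq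
  exact key _ _ hpq p rfl

private lemma needs_one {anc : V → V → Prop} (s : Strategy V) {x y : V} (hxy : x ≠ y)
    (hx : s.run anc x = x) (hy : s.run anc y = y) : 1 ≤ s.height := by
  cases s with
  | leaf v =>
    simp only [Strategy.run] at hx hy
    exact absurd (hx.symm.trans hy) hxy
  | node q l r => simp [Strategy.height]

open Classical in
private lemma run_node {anc : V → V → Prop} (q : V) (l r : Strategy V) (x : V) :
    (Strategy.node q l r).run anc x = if anc x q then l.run anc x else r.run anc x := rfl

end Helpers

def iotaF : ∀ m : ℕ, Pos (FibTree (m+1)) → Pos (FibTree (m+2))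
  | 0, _ => Sum.inl PUnit.unit
  | (_+1), p => Sum.inl (Sum.inl p)

lemma iotaF_inj : ∀ m, Function.Injective (iotaF m)
  | 0 => fun x y _ => rfl
  | (_+1) => fun x y h =>
      Sum.inl_injective (Sum.inl_injective
        (show Sum.inl (Sum.inl x) = Sum.inl (Sum.inl y) from h))

lemma iotaF_edge : ∀ m (x y : Pos (FibTree (m+1))),
    edgeOf (FibTree (m+1)) x y ↔ edgeOf (FibTree (m+2)) (iotaF m x) (iotaF m y)
  | 0, x, y => by
      constructor
      · intro h; exact h.elim
      · intro h; exact h.elim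
  | (_+1), x, y => Iff.rfl

lemma iotaF_sink : ∀ m, edgeOf (FibTree (m+2)) (iotaF m (sinkOf (FibTree (m+1)))) (sinkOf (FibTree (m+2)))
  | 0 => rfl
  | (_+1) => rfl

private lemma main_lemma {V : Type} [Fintype V] {E : V → V → Prop}
    (hacyc : ∀ v : V, ¬ Relation.TransGen E v v)
    (htree : ∀ v : V, {w | E v w}.ncard ≤ 1) :
    ∀ (n : ℕ) (s : Strategy V), s.height ≤ n → ∀ i : ℕ, 1 ≤ i →
    ∀ (f : Pos (FibTree i) → V) (g : Pos (FibTree (i+1)) → V),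
      Function.Injective f → Function.Injective g →
      (∀ a b, edgeOf (FibTree i) a b ↔ E (f a) (f b)) →
      (∀ a b, edgeOf (FibTree (i+1)) a b ↔ E (g a) (g b)) →
      (∀ a b, f a ≠ g b) →
      ¬ Relation.ReflTransGen E (f (sinkOf (FibTree i))) (g (sinkOf (FibTree (i+1)))) →
      ¬ Relation.ReflTransGen E (g (sinkOf (FibTree (i+1)))) (f (sinkOf (FibTree i))) →
      (∀ p, s.run (fun u v => Relation.ReflTransGen E u v) (f p) = f p) →
      (∀ p, s.run (fun u v => Relation.ReflTransGen E u v) (g p) = g p) →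
      i + 1 ≤ s.height := by
  intro n
  induction n with
  | zero =>
    intro s hs i hi f g hfinj hginj hfE hgE hdisj hs1 hs2 hcf hcg
    have h1 := needs_one s (hdisj (sinkOf _) (sinkOf _)) (hcf _) (hcg _)
    omega
  | succ n IH =>
    intro s hs i hi f g hfinj hginj hfE hgE hdisj hs1 hs2 hcf hcg
    cases s with
    | leaf v =>
      have h1 := needs_one (Strategy.leaf v) (hdisj (sinkOf _) (sinkOf _)) (hcf _) (hcg _)
      simp [Strategy.height] at h1
    | node q l r =>
      simp only [Strategy.height] at hs ⊢
      have hln : l.height ≤ n := by omega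
      have hrn : r.height ≤ n := by omega
      have hra : ∀ p, Relation.ReflTransGen E (f p) (f (sinkOf (FibTree i))) :=
        fun p => Relation.ReflTransGen.lift f (fun x y h => (hfE x y).mp h) _ _ (reach_sink _ p)
      have hrb : ∀ p, Relation.ReflTransGen E (g p) (g (sinkOf (FibTree (i+1)))) :=
        fun p => Relation.ReflTransGen.lift g (fun x y h => (hgE x y).mp h) _ _ (reach_sink _ p)
      have hl : ∀ x : V,
          (Strategy.node q l r).run (fun u v => Relation.ReflTransGen E u v) x = x →
          Relation.ReflTransGen E x q →
          l.run (fun u v => Relation.ReflTransGen E u v) x = x := by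
        intro x hx hq; rwa [run_node, if_pos hq] at hx
      have hr2 : ∀ x : V,
          (Strategy.node q l r).run (fun u v => Relation.ReflTransGen E u v) x = x →
          ¬ Relation.ReflTransGen E x q →
          r.run (fun u v => Relation.ReflTransGen E u v) x = x := by
        intro x hx hq; rwa [run_node, if_neg hq] at hx
      -- bound when a full copy of F_{i+1} is kept
      have pairbound : ∀ s' : Strategy V, s'.height ≤ n →
          (∀ p, s'.run (fun u v => Relation.ReflTransGen E u v) (g p) = g p) →
          i ≤ s'.height := by
        intro s' hs' hc
        rcases Nat.lt_or_ge i 2 with h2 | h2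
        · obtain rfl : i = 1 := by omega
          exact needs_one s' (hginj.ne Sum.inl_ne_inr)
            (hc (Sum.inl PUnit.unit)) (hc (Sum.inr PUnit.unit))
        · obtain ⟨m, rfl⟩ : ∃ m, i = m + 2 := ⟨i - 2, by omega⟩
          have hEdb : E (g (Sum.inl (Sum.inr (sinkOf (FibTree (m+1))))))
              (g (sinkOf (FibTree (m+3)))) := (hgE _ _).mp rfl
          have hEd1b : E (g (Sum.inl (Sum.inl (sinkOf (FibTree (m+2))))))
              (g (sinkOf (FibTree (m+3)))) := (hgE _ _).mp rfl
          have hne12 : (Sum.inl (Sum.inr (sinkOf (FibTree (m+1)))) : Pos (FibTree (m+3))) ≠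
              Sum.inl (Sum.inl (sinkOf (FibTree (m+2)))) :=
            fun h => Sum.inl_ne_inr (Sum.inl_injective h).symm
          have hmain := IH s' hs' (m+1) (by omega)
            (fun p => g (Sum.inl (Sum.inr p)))
            (fun p => g (Sum.inl (Sum.inl p)))
            (fun x y h => Sum.inr_injective (Sum.inl_injective (hginj h)))
            (fun x y h => Sum.inl_injective (Sum.inl_injective (hginj h)))
            (fun x y => hgE (Sum.inl (Sum.inr x)) (Sum.inl (Sum.inr y)))
            (fun x y => hgE (Sum.inl (Sum.inl x)) (Sum.inl (Sum.inl y)))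
            (fun x y h => Sum.inl_ne_inr ((Sum.inl_injective (hginj h)).symm))
            (incomp_step hacyc htree hEdb hEd1b (hginj.ne hne12))
            (incomp_step hacyc htree hEd1b hEdb (hginj.ne hne12.symm))
            (fun p => hc (Sum.inl (Sum.inr p)))
            (fun p => hc (Sum.inl (Sum.inl p)))
          omega
      by_cases hbq : Relation.ReflTransGen E (g (sinkOf (FibTree (i+1)))) q
      · by_cases haq : Relation.ReflTransGen E (f (sinkOf (FibTree i))) q
        · -- C1 : everything is bugged, recurse left with the same configuration
          have hb := IH l hln i hi f g hfinj hginj hfE hgE hdisj hs1 hs2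
            (fun p => hl _ (hcf p) ((hra p).trans haq))
            (fun p => hl _ (hcg p) ((hrb p).trans hbq))
          omega
        · -- C4 : the whole copy of F_{i+1} is bugged
          have hb := pairbound l hln (fun p => hl _ (hcg p) ((hrb p).trans hbq))
          omega
      · by_cases hside : (Relation.ReflTransGen E (f (sinkOf (FibTree i))) q) ∨ ∃ p, q = f p
        · -- C3 : the whole copy of F_{i+1} is clean
          have hcleanB : ∀ p, ¬ Relation.ReflTransGen E (g p) q := by
            intro p hneg
            rcases escape htree hgE hneg with ⟨p', rfl⟩ | h
            · rcases hside with haq | ⟨p'', hq⟩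
              · exact hs1 (haq.trans (hrb p'))
              · exact hdisj p'' p' hq.symm
            · exact hbq h
          have hb := pairbound r hrn (fun p => hr2 _ (hcg p) (hcleanB p))
          omega
        · push_neg at hside
          obtain ⟨haq, hqf⟩ := hside
          have hcleanA : ∀ p, ¬ Relation.ReflTransGen E (f p) q := by
            intro p hneg
            rcases escape htree hfE hneg with ⟨p', hq⟩ | h
            · exact hqf p' hq
            · exact haq h
          by_cases hqg : ∃ p, q = g p
          · -- C5 : the query is inside the copy of F_{i+1}
            obtain ⟨pq, rfl⟩ := hqg
            rcases Nat.lt_or_ge i 2 with h2 | h2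
            · obtain rfl : i = 1 := by omega
              obtain u | u := pq
              · have hE0 : E (g (Sum.inl u)) (g (sinkOf (FibTree (1+1)))) := (hgE _ _).mp rfl
                have hbcln : ¬ Relation.ReflTransGen E (g (sinkOf (FibTree (1+1))))
                    (g (Sum.inl u)) := fun h => reach_back hacyc h hE0
                have hb := needs_one r (hdisj (sinkOf _) (sinkOf _))
                  (hr2 _ (hcf _) (hcleanA _)) (hr2 _ (hcg _) hbcln)
                omega
              · exact absurd Relation.ReflTransGen.refl hbq
            · obtain ⟨m, rfl⟩ : ∃ m, i = m + 2 := ⟨i - 2, by omega⟩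
              have hEdb : E (g (Sum.inl (Sum.inr (sinkOf (FibTree (m+1))))))
                  (g (sinkOf (FibTree (m+3)))) := (hgE _ _).mp rfl
              have hEd1b : E (g (Sum.inl (Sum.inl (sinkOf (FibTree (m+2))))))
                  (g (sinkOf (FibTree (m+3)))) := (hgE _ _).mp rfl
              obtain (p₀ | p₀) | u := pq
              · -- query inside the F_{i} part : keep (B2, A)
                have hf'E : ∀ x y, edgeOf (FibTree (m+1)) x y ↔
                    E (g (Sum.inl (Sum.inr x))) (g (Sum.inl (Sum.inr y))) :=
                  fun x y => hgE (Sum.inl (Sum.inr x)) (Sum.inl (Sum.inr y))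
                have hcleanB2 : ∀ p, ¬ Relation.ReflTransGen E (g (Sum.inl (Sum.inr p)))
                    (g (Sum.inl (Sum.inl p₀))) := by
                  intro p hneg
                  rcases escape htree hf'E hneg with ⟨p', hq⟩ | h
                  · exact Sum.inl_ne_inr (Sum.inl_injective (hginj hq))
                  · have hne : (Sum.inl (Sum.inr (sinkOf (FibTree (m+1)))) :
                        Pos (FibTree (m+3))) ≠ Sum.inl (Sum.inl p₀) :=
                      fun hh => Sum.inl_ne_inr (Sum.inl_injective hh).symm
                    exact hbq (step_of htree h (hginj.ne hne) hEdb)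
                have hb := IH r hrn (m+1) (by omega)
                  (fun p => g (Sum.inl (Sum.inr p))) f
                  (fun x y h => Sum.inr_injective (Sum.inl_injective (hginj h)))
                  hfinj hf'E hfE
                  (fun x y h => hdisj y (Sum.inl (Sum.inr x)) h.symm)
                  (fun h => hs2 (step_of htree h ((hdisj _ _).symm) hEdb))
                  (fun h => hs1 (h.trans (Relation.ReflTransGen.single hEdb)))
                  (fun p => hr2 _ (hcg (Sum.inl (Sum.inr p))) (hcleanB2 p))
                  (fun p => hr2 _ (hcf p) (hcleanA p))
                omega
              · -- query inside the F_{i-1} part : keep (sub-copy of A, B1)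
                have hg'E : ∀ x y, edgeOf (FibTree (m+2)) x y ↔
                    E (g (Sum.inl (Sum.inl x))) (g (Sum.inl (Sum.inl y))) :=
                  fun x y => hgE (Sum.inl (Sum.inl x)) (Sum.inl (Sum.inl y))
                have hEca : E (f (iotaF m (sinkOf (FibTree (m+1)))))
                    (f (sinkOf (FibTree (m+2)))) := (hfE _ _).mp (iotaF_sink m)
                have hcleanB1 : ∀ p, ¬ Relation.ReflTransGen E (g (Sum.inl (Sum.inl p)))
                    (g (Sum.inl (Sum.inr p₀))) := by
                  intro p hneg
                  rcases escape htree hg'E hneg with ⟨p', hq⟩ | h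
                  · exact Sum.inl_ne_inr (Sum.inl_injective (hginj hq)).symm
                  · have hne : (Sum.inl (Sum.inl (sinkOf (FibTree (m+2)))) :
                        Pos (FibTree (m+3))) ≠ Sum.inl (Sum.inr p₀) :=
                      fun hh => Sum.inl_ne_inr (Sum.inl_injective hh)
                    exact hbq (step_of htree h (hginj.ne hne) hEd1b)
                have hb := IH r hrn (m+1) (by omega)
                  (fun p => f (iotaF m p))
                  (fun p => g (Sum.inl (Sum.inl p)))
                  (fun x y h => iotaF_inj m (hfinj h))
                  (fun x y h => Sum.inl_injective (Sum.inl_injective (hginj h)))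
                  (fun x y => (iotaF_edge m x y).trans (hfE _ _))
                  hg'E
                  (fun x y => hdisj _ _)
                  (fun h => hs1 ((step_of htree h (hdisj _ _) hEca).trans
                    (Relation.ReflTransGen.single hEd1b)))
                  (fun h => hs2 ((step_of htree h ((hdisj _ _).symm) hEd1b).trans
                    (Relation.ReflTransGen.single hEca)))
                  (fun p => hr2 _ (hcf (iotaF m p)) (hcleanA (iotaF m p)))
                  (fun p => hr2 _ (hcg (Sum.inl (Sum.inl p))) (hcleanB1 p))
                omega
              · exact absurd Relation.ReflTransGen.refl hbq
          · -- C2 : everything is clean, recurse right with the same configuration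
            have hcleanB : ∀ p, ¬ Relation.ReflTransGen E (g p) q := by
              intro p hneg
              rcases escape htree hgE hneg with ⟨p', hq⟩ | h
              · exact hqg ⟨p', hq⟩
              · exact hbq h
            have hb := IH r hrn i hi f g hfinj hginj hfE hgE hdisj hs1 hs2
              (fun p => hr2 _ (hcf p) (hcleanA p))
              (fun p => hr2 _ (hcg p) (hcleanB p))
            omega


/-- If an in-tree `T` (all arcs towards a root sink, out-degree at most 1) contains two
vertex-disjoint induced subtrees isomorphic to the Fibonacci trees `F_k` and `F_{k+1}`
whose sinks are not ancestors of each other, then every correct strategy for the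
Regression Search Problem on `T` uses at least `k + 1` queries in the worst case. -/
theorem fibtree_lower_bound (k : ℕ) (hk : 1 ≤ k)
    {V : Type} [Fintype V] (E : V → V → Prop)
    (hacyc : ∀ v : V, ¬ Relation.TransGen E v v)
    (root : V) (hroot : ∀ v : V, Relation.ReflTransGen E v root)
    (htree : ∀ v : V, {w | E v w}.ncard ≤ 1)
    (f : Pos (FibTree k) → V) (g : Pos (FibTree (k + 1)) → V)
    (hfinj : Function.Injective f) (hginj : Function.Injective g)
    (hfE : ∀ a b, edgeOf (FibTree k) a b ↔ E (f a) (f b))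
    (hgE : ∀ a b, edgeOf (FibTree (k + 1)) a b ↔ E (g a) (g b))
    (hdisj : ∀ a b, f a ≠ g b)
    (hs1 : ¬ Relation.ReflTransGen E (f (sinkOf (FibTree k))) (g (sinkOf (FibTree (k + 1)))))
    (hs2 : ¬ Relation.ReflTransGen E (g (sinkOf (FibTree (k + 1)))) (f (sinkOf (FibTree k)))) :
    ∀ s : Strategy V,
      (∀ x : V, s.run (fun u v => Relation.ReflTransGen E u v) x = x) →
      k + 1 ≤ s.height := by
  intro s hcor
  exact main_lemma hacyc htree s.height s le_rfl k hk f g hfinj hginj hfE hgE hdisj hs1 hs2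
    (fun p => hcor (f p)) (fun p => hcor (g p))
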